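/- Let ω be an increasing unbounded function such that liminf_{t→∞} ω(Ht)/ω(t) > 1 for some H > 0. If η₁, η₂ are increasing unbounded functions satisfying condition (α) (η_i(2t) = O(η_i(t))) and there exist L > 0, s₀ ≥ 0 with ω⁻¹(s/L)η₁⁻¹(s/L) ≤ ω⁻¹(s)η₂⁻¹(s) ≤ ω⁻¹(Ls)η₁⁻¹(Ls) for all s ≥ s₀ (and symmetrically), then η₁ ≍ η₂, i.e., η₁ = O(η₂) and η₂ = O(η₁). -/

import Mathlib

open Filter Asymptotics

/-- Generalized inverse of an increasing function `f : [0,∞) → [0,∞)`: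
f⁻¹(s) = inf{t ≥ 0 : f(t) ≥ s}. -/
noncomputable def ginv (f : ℝ → ℝ) (s : ℝ) : ℝ := sInf {t : ℝ | 0 ≤ t ∧ s ≤ f t}

lemma ginv_nonneg (f : ℝ → ℝ) (s : ℝ) : 0 ≤ ginv f s :=
  Real.sInf_nonneg fun _ ht => ht.1

lemma ginv_bddBelow (f : ℝ → ℝ) (s : ℝ) : BddBelow {t : ℝ | 0 ≤ t ∧ s ≤ f t} :=
  ⟨0, fun _ hx => hx.1⟩

lemma ginv_set_nonempty {f : ℝ → ℝ} (hf : Tendsto f atTop atTop) (s : ℝ) :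
    {t : ℝ | 0 ≤ t ∧ s ≤ f t}.Nonempty := by
  obtain ⟨t, h1, h2⟩ := ((eventually_ge_atTop (0:ℝ)).and (hf.eventually_ge_atTop s)).exists
  exact ⟨t, h1, h2⟩

lemma ginv_le {f : ℝ → ℝ} {s t : ℝ} (ht : 0 ≤ t) (hst : s ≤ f t) : ginv f s ≤ t :=
  csInf_le (ginv_bddBelow f s) ⟨ht, hst⟩

lemma lt_of_lt_ginv {f : ℝ → ℝ} {s t : ℝ} (ht : 0 ≤ t) (h : t < ginv f s) : f t < s := by
  by_contra hc
  push_neg at hc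
  exact absurd (ginv_le ht hc) (not_le.mpr h)

lemma le_ginv {f : ℝ → ℝ} {s r : ℝ} (hne : {t : ℝ | 0 ≤ t ∧ s ≤ f t}.Nonempty)
    (h : ∀ t, 0 ≤ t → s ≤ f t → r ≤ t) : r ≤ ginv f s :=
  le_csInf hne fun t ht => h t ht.1 ht.2

/-- If `s > f r` with `r ≥ 0` and `f` monotone on `[0,∞)`, then `ginv f s ≥ r`. -/
lemma r_le_ginv {f : ℝ → ℝ} {s r : ℝ} (hfm : MonotoneOn f (Set.Ici 0)) (hr : 0 ≤ r)
    (hne : {t : ℝ | 0 ≤ t ∧ s ≤ f t}.Nonempty) (hs : f r < s) : r ≤ ginv f s := by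
  refine le_ginv hne fun t ht hst => ?_
  by_contra hc
  push_neg at hc
  have := hfm ht hr hc.le
  linarith

/-- Key lemma: from the liminf condition, the generalized inverse of ω has
`ginv ω (L s) ≤ K ginv ω s` for large `s`, and `ginv ω s ≥ 1` there. -/
lemma omega_scale (ω : ℝ → ℝ) (L : ℝ) (hL : 0 < L)
    (hωm : MonotoneOn ω (Set.Ici 0)) (hωt : Tendsto ω atTop atTop)
    (hliminf : ∃ H > (0:ℝ), 1 < Filter.liminf (fun t : ℝ => ω (H * t) / ω t) atTop) :
    ∃ K ≥ (1:ℝ), ∃ s₁ ≥ (0:ℝ), ∀ s ≥ s₁, ginv ω (L * s) ≤ K * ginv ω s ∧ 1 ≤ ginv ω s := by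
  obtain ⟨H, hH0, hlim⟩ := hliminf
  -- extract λ > 1 with eventual ratio bound
  have hlam : ∃ lam : ℝ, 1 < lam ∧ ∀ᶠ t in atTop, lam ≤ ω (H * t) / ω t := by
    by_contra hc
    push_neg at hc
    have : Filter.liminf (fun t : ℝ => ω (H * t) / ω t) atTop ≤ 1 := by
      rw [Filter.liminf_eq]
      refine Real.sSup_le (fun a ha => ?_) zero_le_one
      by_contra h1
      push_neg at h1
      exact hc a h1 (Filter.Eventually.mono ha fun x hx => not_lt.mpr hx)
    linarith
  obtain ⟨lam, hlam1, hlamev⟩ := hlam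
  have hωpos : ∀ᶠ t in atTop, (1:ℝ) ≤ ω t := hωt.eventually_ge_atTop 1
  obtain ⟨t₀', ht₀'⟩ := (hlamev.and hωpos).exists_forall_of_atTop
  set t₀ : ℝ := max t₀' 1 with ht₀def
  have ht₀1 : (1:ℝ) ≤ t₀ := le_max_right _ _
  have ht₀0 : (0:ℝ) ≤ t₀ := by linarith
  have hbase : ∀ t ≥ t₀, lam * ω t ≤ ω (H * t) ∧ 1 ≤ ω t := by
    intro t ht
    have h := ht₀' t (le_trans (le_max_left _ _) ht)
    have hωt1 : (0:ℝ) < ω t := by linarith [h.2]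
    exact ⟨(le_div_iff₀ hωt1).mp h.1, h.2⟩
  -- H > 1
  have hH1 : 1 < H := by
    by_contra hc
    push_neg at hc
    have h1 := hbase t₀ le_rfl
    have hHt : H * t₀ ≤ t₀ := by nlinarith
    have hHt0 : 0 ≤ H * t₀ := by positivity
    have := hωm hHt0 ht₀0 hHt
    nlinarith [h1.1, h1.2]
  have hlam0 : (0:ℝ) < lam := by linarith
  -- iteration
  have hiter : ∀ n : ℕ, ∀ t ≥ t₀, lam ^ n * ω t ≤ ω (H ^ n * t) := by
    intro n
    induction n with
    | zero => intro t _; simp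
    | succ n ih =>
      intro t ht
      have ht0 : 0 ≤ t := le_trans ht₀0 ht
      have hHn1 : (1:ℝ) ≤ H ^ n := one_le_pow₀ (le_of_lt hH1)
      have hHnt : t₀ ≤ H ^ n * t := le_trans ht (by nlinarith)
      have h1 := (hbase (H ^ n * t) hHnt).1
      have h2 := ih t ht
      calc lam ^ (n + 1) * ω t = lam * (lam ^ n * ω t) := by ring
        _ ≤ lam * ω (H ^ n * t) := by nlinarith
        _ ≤ ω (H * (H ^ n * t)) := h1
        _ = ω (H ^ (n + 1) * t) := by ring_nf
  obtain ⟨n, hn⟩ := pow_unbounded_of_one_lt L hlam1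
  have hHn1 : (1:ℝ) ≤ H ^ n := one_le_pow₀ (le_of_lt hH1)
  have hHn0 : (0:ℝ) < H ^ n := by linarith
  refine ⟨H ^ n, hHn1, max (ω t₀ + 1) 1, le_trans zero_le_one (le_max_right _ _), fun s hs => ?_⟩
  have hs1 : (1:ℝ) ≤ s := le_trans (le_max_right _ _) hs
  have hsω : ω t₀ < s := by
    have := le_trans (le_max_left _ _) hs; linarith
  have hne : {t : ℝ | 0 ≤ t ∧ s ≤ ω t}.Nonempty := ginv_set_nonempty hωt s
  have hgt₀ : t₀ ≤ ginv ω s := r_le_ginv hωm ht₀0 hne hsω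
  have hg1 : (1:ℝ) ≤ ginv ω s := le_trans ht₀1 hgt₀
  refine ⟨?_, hg1⟩
  -- main bound via ε-characterization of sInf
  rw [show ginv ω (L * s) = sInf {t : ℝ | 0 ≤ t ∧ L * s ≤ ω t} from rfl,
    Real.sInf_le_iff (ginv_bddBelow ω (L * s)) (ginv_set_nonempty hωt (L * s))]
  intro ε hε
  have hlt : sInf {t : ℝ | 0 ≤ t ∧ s ≤ ω t} < ginv ω s + ε / H ^ n := by
    have : 0 < ε / H ^ n := by positivity
    change ginv ω s < _
    linarith
  obtain ⟨t', ht'mem, ht'lt⟩ := exists_lt_of_csInf_lt hne hlt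
  have ht'ge : t₀ ≤ t' := by
    have : ginv ω s ≤ t' := csInf_le (ginv_bddBelow ω s) ht'mem
    linarith
  refine ⟨H ^ n * t', ⟨mul_nonneg (le_of_lt hHn0) ht'mem.1, ?_⟩, ?_⟩
  · have h1 := hiter n t' ht'ge
    have hlamn : (0:ℝ) < lam ^ n := by positivity
    have : s ≤ ω t' := ht'mem.2
    nlinarith
  · have : H ^ n * t' < H ^ n * (ginv ω s + ε / H ^ n) :=
      mul_lt_mul_of_pos_left ht'lt hHn0
    have heq : H ^ n * (ε / H ^ n) = ε := by field_simp
    nlinarith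

set_option maxHeartbeats 1000000 in
/-- One direction of the comparison. -/
lemma comp_lemma (ω ηa ηb : ℝ → ℝ) (L K : ℝ) (hL : 0 < L) (hK : 1 ≤ K)
    (hηam : MonotoneOn ηa (Set.Ici 0)) (hηat : Tendsto ηa atTop atTop)
    (s₁ : ℝ) (hs₁ : ∀ s ≥ s₁, ginv ω (L * s) ≤ K * ginv ω s ∧ 1 ≤ ginv ω s)
    (s₀ : ℝ)
    (hsand : ∀ s ≥ s₀, ginv ω (s / L) * ginv ηa (s / L) ≤ ginv ω s * ginv ηb s)
    (hα : ∃ A > (0:ℝ), ∃ T ≥ (0:ℝ), ∀ t ≥ T, ηa (2 * t) ≤ A * ηa t) :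
    ∃ C > (0:ℝ), ∃ T ≥ (0:ℝ), ∀ t ≥ T, ηb t ≤ C * ηa t := by
  have hK0 : (0:ℝ) < K := by linarith
  obtain ⟨A, hA0, T_A, hT_A0, hαA⟩ := hα
  set A' : ℝ := max A 1 with hA'def
  have hA'1 : (1:ℝ) ≤ A' := le_max_right _ _
  have hA'0 : (0:ℝ) < A' := by linarith
  -- threshold where ηa is nonnegative
  obtain ⟨Tp, hTp⟩ := (hηat.eventually_ge_atTop 0).exists_forall_of_atTop
  set T' : ℝ := max (max T_A Tp) 0 with hT'def
  have hT'0 : (0:ℝ) ≤ T' := le_max_right _ _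
  -- iterated condition (α)
  have hαiter : ∀ m : ℕ, ∀ t ≥ T', ηa (2 ^ m * t) ≤ A' ^ m * ηa t := by
    intro m
    induction m with
    | zero => intro t _; simp
    | succ m ih =>
      intro t ht
      have ht0 : 0 ≤ t := le_trans hT'0 ht
      have h2m1 : (1:ℝ) ≤ 2 ^ m := one_le_pow₀ one_le_two
      have h2mt : T_A ≤ 2 ^ m * t :=
        le_trans (le_trans (le_max_left _ _) (le_max_left _ _)) (le_trans ht (by nlinarith))
      have hpos : 0 ≤ ηa (2 ^ m * t) := hTp (2 ^ m * t)
        (le_trans (le_trans (le_max_right _ _) (le_max_left _ _)) (le_trans ht (by nlinarith)))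
      have h1 := hαA (2 ^ m * t) h2mt
      have h2 := ih t ht
      have hA'm : (0:ℝ) < A' ^ m := by positivity
      calc ηa (2 ^ (m + 1) * t) = ηa (2 * (2 ^ m * t)) := by ring_nf
        _ ≤ A * ηa (2 ^ m * t) := h1
        _ ≤ A' * ηa (2 ^ m * t) := by nlinarith [le_max_left A 1]
        _ ≤ A' * (A' ^ m * ηa t) := by nlinarith
        _ = A' ^ (m + 1) * ηa t := by ring
  -- substituted sandwich inequality
  set u₁ : ℝ := max (max (s₀ / L) s₁) 1 with hu₁def
  have star : ∀ u ≥ u₁, ginv ηa u ≤ K * ginv ηb (L * u) := by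
    intro u hu
    have hus₀ : s₀ ≤ L * u := by
      have h1 : s₀ / L ≤ u := le_trans (le_trans (le_max_left _ _) (le_max_left _ _)) hu
      calc s₀ = L * (s₀ / L) := by field_simp
        _ ≤ L * u := by nlinarith
    have h1 := hsand (L * u) hus₀
    rw [mul_div_cancel_left₀ u (ne_of_gt hL)] at h1
    have h2 := hs₁ u (le_trans (le_trans (le_max_right _ _) (le_max_left _ _)) hu)
    have hb0 : 0 ≤ ginv ηb (L * u) := ginv_nonneg ηb (L * u)
    have h3 : ginv ω (L * u) * ginv ηb (L * u) ≤ (K * ginv ω u) * ginv ηb (L * u) :=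
      mul_le_mul_of_nonneg_right h2.1 hb0
    have h4 : ginv ω u * ginv ηa u ≤ ginv ω u * (K * ginv ηb (L * u)) := by
      calc ginv ω u * ginv ηa u ≤ (K * ginv ω u) * ginv ηb (L * u) := le_trans h1 h3
        _ = ginv ω u * (K * ginv ηb (L * u)) := by ring
    exact le_of_mul_le_mul_left h4 (by linarith [h2.2])
  -- pick m with 2^m ≥ 2K
  obtain ⟨m, hm⟩ := pow_unbounded_of_one_lt (2 * K) (one_lt_two (α := ℝ))
  -- threshold for u ≥ u₁ and ηa t ≥ 1
  obtain ⟨T₂, hT₂⟩ := (hηat.eventually_ge_atTop (max u₁ 1)).exists_forall_of_atTop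
  set T : ℝ := max (max T' T₂) 1 with hTdef
  have hT1 : (1:ℝ) ≤ T := le_max_right _ _
  refine ⟨L * (A' ^ m + 1), by positivity, T, by linarith, fun t ht => ?_⟩
  have ht1 : (1:ℝ) ≤ t := le_trans hT1 ht
  have ht0 : (0:ℝ) ≤ t := by linarith
  have htT' : T' ≤ t := le_trans (le_trans (le_max_left _ _) (le_max_left _ _)) ht
  have htT₂ : T₂ ≤ t := le_trans (le_trans (le_max_right _ _) (le_max_left _ _)) ht
  have hηat1 : max u₁ 1 ≤ ηa t := hT₂ t htT₂
  have hηatu₁ : u₁ ≤ ηa t := le_trans (le_max_left _ _) hηat1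
  have hηat1' : (1:ℝ) ≤ ηa t := le_trans (le_max_right _ _) hηat1
  have h2Kt0 : (0:ℝ) ≤ 2 * K * t := by positivity
  have ht2Kt : t ≤ 2 * K * t := by nlinarith
  have hηa2Kt : ηa t ≤ ηa (2 * K * t) := hηam ht0 h2Kt0 ht2Kt
  set u : ℝ := ηa (2 * K * t) + 1 with hudef
  have huu₁ : u₁ ≤ u := by simp only [hudef]; linarith
  have hstar := star u huu₁
  -- ginv ηa u ≥ 2Kt
  have hginva : 2 * K * t ≤ ginv ηa u := by
    refine le_ginv (ginv_set_nonempty hηat u) fun t' ht'0 hut' => ?_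
    by_contra hc
    push_neg at hc
    have := hηam ht'0 h2Kt0 hc.le
    simp only [hudef] at hut'
    linarith
  have hlt : t < ginv ηb (L * u) := by
    have h1 : 2 * K * t ≤ K * ginv ηb (L * u) := le_trans hginva hstar
    nlinarith
  have hηbt : ηb t < L * u := lt_of_lt_ginv ht0 hlt
  -- bound u using condition α
  have h2m : 2 * K * t ≤ 2 ^ m * t := by nlinarith
  have h2m0 : (0:ℝ) ≤ 2 ^ m * t := by positivity
  have hmono : ηa (2 * K * t) ≤ ηa (2 ^ m * t) := hηam h2Kt0 h2m0 h2m
  have hit := hαiter m t htT'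
  have hA'm0 : (0:ℝ) < A' ^ m := by positivity
  have : u ≤ (A' ^ m + 1) * ηa t := by
    simp only [hudef]
    nlinarith
  nlinarith

/-- if liminf ω(Ht)/ω(t) > 1 for some H > 0, η₁, η₂ satisfy
condition (α), and the products of generalized inverses are sandwiched
(in both directions), then η₁ ≍ η₂. -/
theorem stmt15 (ω η₁ η₂ : ℝ → ℝ)
    (hωm : MonotoneOn ω (Set.Ici 0)) (hωt : Tendsto ω atTop atTop)
    (hη₁m : MonotoneOn η₁ (Set.Ici 0)) (hη₁t : Tendsto η₁ atTop atTop)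
    (hη₂m : MonotoneOn η₂ (Set.Ici 0)) (hη₂t : Tendsto η₂ atTop atTop)
    (hliminf : ∃ H > (0:ℝ), 1 < Filter.liminf (fun t : ℝ => ω (H * t) / ω t) atTop)
    (hη₁α : ∃ A > (0:ℝ), ∃ T ≥ (0:ℝ), ∀ t ≥ T, η₁ (2 * t) ≤ A * η₁ t)
    (hη₂α : ∃ A > (0:ℝ), ∃ T ≥ (0:ℝ), ∀ t ≥ T, η₂ (2 * t) ≤ A * η₂ t)
    (hsand : ∃ L > (0:ℝ), ∃ s₀ ≥ (0:ℝ), ∀ s ≥ s₀,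
      (ginv ω (s / L) * ginv η₁ (s / L) ≤ ginv ω s * ginv η₂ s ∧
        ginv ω s * ginv η₂ s ≤ ginv ω (L * s) * ginv η₁ (L * s)) ∧
      (ginv ω (s / L) * ginv η₂ (s / L) ≤ ginv ω s * ginv η₁ s ∧
        ginv ω s * ginv η₁ s ≤ ginv ω (L * s) * ginv η₂ (L * s))) :
    ∃ C > (0:ℝ), ∃ T ≥ (0:ℝ), ∀ t ≥ T, η₁ t ≤ C * η₂ t ∧ η₂ t ≤ C * η₁ t := by
  obtain ⟨L, hL, s₀, hs₀, hsand⟩ := hsand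
  obtain ⟨K, hK, s₁, hs₁0, hs₁⟩ := omega_scale ω L hL hωm hωt hliminf
  -- η₂ ≤ C₁ η₁ from the first pair's first inequality (ηa = η₁, ηb = η₂)
  obtain ⟨C₁, hC₁, T₁, hT₁, h₁⟩ := comp_lemma ω η₁ η₂ L K hL hK hη₁m hη₁t s₁ hs₁ s₀
    (fun s hs => ((hsand s hs).1).1) hη₁α
  -- η₁ ≤ C₂ η₂ from the second pair's first inequality (ηa = η₂, ηb = η₁)
  obtain ⟨C₂, hC₂, T₂, hT₂, h₂⟩ := comp_lemma ω η₂ η₁ L K hL hK hη₂m hη₂t s₁ hs₁ s₀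
    (fun s hs => ((hsand s hs).2).1) hη₂α
  obtain ⟨Tp, hTp⟩ := ((hη₁t.eventually_ge_atTop 0).and (hη₂t.eventually_ge_atTop 0)).exists_forall_of_atTop
  refine ⟨max C₁ C₂, lt_of_lt_of_le hC₁ (le_max_left _ _),
    max (max T₁ T₂) (max Tp 0), le_trans (le_max_right Tp 0) (le_max_right _ _), fun t ht => ?_⟩
  have h1 := h₁ t (le_trans (le_trans (le_max_left _ _) (le_max_left _ _)) ht)
  have h2 := h₂ t (le_trans (le_trans (le_max_right _ _) (le_max_left _ _)) ht)
  have hp := hTp t (le_trans (le_trans (le_max_left _ _) (le_max_right _ _)) ht)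
  constructor
  · calc η₁ t ≤ C₂ * η₂ t := h2
      _ ≤ max C₁ C₂ * η₂ t := mul_le_mul_of_nonneg_right (le_max_right _ _) hp.2
  · calc η₂ t ≤ C₁ * η₁ t := h1
      _ ≤ max C₁ C₂ * η₁ t := mul_le_mul_of_nonneg_right (le_max_left _ _) hp.1
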